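/- If E_min(A) is computably reducible to E_min(B) for computable well-orderings A, B of ℕ, then there is an embedding of A into B computable from the halting problem 0'. -/

import Mathlib

/-- The `e`-th computably enumerable set of natural numbers: the domain of the
`e`-th partial computable function. -/
def Wce (e : ℕ) : Set ℕ :=
  {x | ((Denumerable.ofNat Nat.Partrec.Code e).eval x).Dom}


/-- A computable well-ordering of ℕ: a computable (Bool-valued) binary relation
whose associated strict relation is a well-order on ℕ. -/
structure CompWO where
  r : ℕ → ℕ → Bool
  comp : Computable₂ r
  wo : IsWellOrder ℕ (fun a b => r a b = true)

/-- `m` is the `A`-least element of `S`. -/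
def IsMinOf (A : CompWO) (S : Set ℕ) (m : ℕ) : Prop :=
  m ∈ S ∧ ∀ x ∈ S, A.r x m = false

/-- The equivalence relation `E_min(A)` on indices of c.e. sets: `W_e` and `W_i`
have the same `A`-least element, or are both empty. -/
def Emin (A : CompWO) (e i : ℕ) : Prop :=
  (Wce e = ∅ ∧ Wce i = ∅) ∨ ∃ m, IsMinOf A (Wce e) m ∧ IsMinOf A (Wce i) m

/-- Computable reducibility of binary relations on ℕ. -/
def CompReducible (E F : ℕ → ℕ → Prop) : Prop :=
  ∃ h : ℕ → ℕ, Computable h ∧ ∀ x y, E x y ↔ F (h x) (h y)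

/-- The order type of a computable well-ordering. -/
noncomputable def CompWO.otype (A : CompWO) : Ordinal :=
  @Ordinal.type ℕ (fun a b => A.r a b = true) A.wo

/-- The `A`-rank of an element: the order type of its set of predecessors. -/
noncomputable def CompWO.rank (A : CompWO) (a : ℕ) : Ordinal :=
  @Ordinal.typein ℕ (fun a b => A.r a b = true) A.wo a

namespace Stmt8Aux

open Nat.Partrec (Code)
open Nat.Partrec.Code

/-! ### Basic order lemmas -/

lemma r_irrefl (A : CompWO) (a : ℕ) : A.r a a = false := by
  have h : IsIrrefl ℕ (fun a b => A.r a b = true) := by haveI := A.wo; infer_instance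
  have := h.irrefl a
  simpa using this

lemma r_trans (A : CompWO) {a b c : ℕ} (h1 : A.r a b = true) (h2 : A.r b c = true) :
    A.r a c = true :=
  by haveI := A.wo; exact trans_of (fun a b : ℕ => A.r a b = true) h1 h2

lemma eq_of_not_r (A : CompWO) {a b : ℕ} (h1 : A.r a b = false) (h2 : A.r b a = false) :
    a = b := by
  rcases (by haveI := A.wo; exact trichotomous_of (fun a b : ℕ => A.r a b = true) a b :
      A.r a b = true ∨ a = b ∨ A.r b a = true) with h | h | h
  · rw [h1] at h; exact absurd h (by simp)
  · exact h
  · rw [h2] at h; exact absurd h (by simp)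

lemma r_of_ne_of_not (A : CompWO) {a b : ℕ} (hne : a ≠ b) (h2 : A.r b a = false) :
    A.r a b = true := by
  cases h : A.r a b
  · exact absurd (eq_of_not_r A h h2) hne
  · rfl

lemma exists_min (A : CompWO) (S : Set ℕ) (hS : S.Nonempty) : ∃ m, IsMinOf A S m := by
  have wf : WellFounded (fun a b => A.r a b = true) := A.wo.toIsWellFounded.wf
  refine ⟨wf.min S hS, wf.min_mem S hS, fun x hx => ?_⟩
  have := wf.not_lt_min S hx
  simpa using this

lemma min_unique (A : CompWO) {S : Set ℕ} {m m' : ℕ}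
    (h1 : IsMinOf A S m) (h2 : IsMinOf A S m') : m = m' :=
  eq_of_not_r A (h2.2 m h1.1) (h1.2 m' h2.1)

/-- The cone above `a` (inclusive): all `x` that are not strictly below `a`. -/
def cone (A : CompWO) (a : ℕ) : Set ℕ := {x | A.r x a = false}

lemma isMin_cone (A : CompWO) (a : ℕ) : IsMinOf A (cone A a) a :=
  ⟨r_irrefl A a, fun _ hx => hx⟩

/-! ### evaln facts -/

lemma dom_iff_evaln {c : Code} {x : ℕ} :
    (eval c x).Dom ↔ ∃ k, (evaln k c x).isSome = true := by
  rw [Part.dom_iff_mem]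
  constructor
  · rintro ⟨y, hy⟩
    obtain ⟨k, hk⟩ := evaln_complete.1 hy
    exact ⟨k, by simp [Option.isSome_iff_exists]; exact ⟨y, hk⟩⟩
  · rintro ⟨k, hk⟩
    obtain ⟨y, hy⟩ := Option.isSome_iff_exists.1 hk
    exact ⟨y, evaln_sound hy⟩

lemma wce_encode (c : Code) : Wce (Encodable.encode c) = {x | (eval c x).Dom} := by
  unfold Wce
  rw [Denumerable.ofNat_encode]

lemma rfind_total_dom (f : ℕ → Bool) :
    (Nat.rfind fun s => Part.some (f s)).Dom ↔ ∃ s, f s = true := by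
  refine (Nat.rfind_dom (p := fun s => Part.some (f s))).trans ?_
  constructor
  · rintro ⟨n, hn, _⟩
    exact ⟨n, (Part.mem_some_iff.1 hn).symm⟩
  · rintro ⟨s, hs⟩
    exact ⟨s, Part.mem_some_iff.2 hs.symm, fun {m} _ => trivial⟩

/-- There is an index for the empty set. -/
lemma exists_empty_index : ∃ z : ℕ, Wce z = ∅ := by
  have : Nat.Partrec (fun _ : ℕ => (Part.none : Part ℕ)) :=
    Partrec.nat_iff.1 Partrec.none
  obtain ⟨c, hc⟩ := exists_code.1 this
  refine ⟨Encodable.encode c, ?_⟩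
  rw [wce_encode, hc]
  simp [Set.eq_empty_iff_forall_notMem]

/-- Uniformly computable indices for cones. -/
lemma exists_idx (A : CompWO) :
    ∃ q : ℕ → ℕ, Computable q ∧ ∀ a, Wce (q a) = cone A a := by
  have hF : Partrec₂ (fun a x : ℕ => bif A.r x a then Part.none else Part.some 0) :=
    Partrec.cond (A.comp.comp Computable.snd Computable.fst) Partrec.none
      (Partrec.const' (Part.some 0))
  have hN : Nat.Partrec
      (fun n : ℕ => bif A.r n.unpair.2 n.unpair.1 then Part.none else Part.some 0) := by
    apply Partrec.nat_iff.1
    exact hF.comp (Computable.fst.comp Primrec.unpair.to_comp)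
      (Computable.snd.comp Primrec.unpair.to_comp)
  obtain ⟨c, hc⟩ := exists_code.1 hN
  obtain ⟨sf, sfc, sfe⟩ := smn
  refine ⟨fun a => Encodable.encode (sf c a),
    Computable.encode.comp (sfc.comp (Computable.const c) Computable.id), fun a => ?_⟩
  rw [wce_encode]
  ext x
  simp only [Set.mem_setOf_eq, cone, sfe, hc]
  cases h : A.r x a <;> simp [h]


lemma comp_evaln {α : Type*} [Primcodable α] {k : α → ℕ} {c : α → Code} {n : α → ℕ}
    (hk : Computable k) (hc : Computable c) (hn : Computable n) :
    Computable fun a => (evaln (k a) (c a) (n a)).isSome :=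
  Primrec.option_isSome.to_comp.comp (primrec_evaln.to_comp.comp ((hk.pair hc).pair hn))

lemma comp_rfind_aux {α : Type*} [Primcodable α] {f : α → ℕ → Bool}
    (hf : Computable fun p : α × ℕ => f p.1 p.2) :
    Partrec fun a => Nat.rfind fun s => Part.some (f a s) := by
  have h : Computable₂ f := hf
  exact (Partrec.rfind h.partrec₂).of_eq fun a => rfl

lemma emin_cone_cone (A : CompWO) {e i a : ℕ} (he : Wce e = cone A a) (hi : Wce i = cone A a) :
    Emin A e i :=
  Or.inr ⟨a, by rw [he]; exact isMin_cone A a, by rw [hi]; exact isMin_cone A a⟩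

section Main

variable {A B : CompWO} {hf : ℕ → ℕ} {idx : ℕ → ℕ}

lemma not_emin_idx (hidx : ∀ a, Wce (idx a) = cone A a) {a b : ℕ} (hne : a ≠ b) :
    ¬ Emin A (idx a) (idx b) := by
  rintro (⟨h1, _⟩ | ⟨m, hm1, hm2⟩)
  · have ha : a ∈ Wce (idx a) := by rw [hidx]; exact (isMin_cone A a).1
    rw [h1] at ha; exact Set.notMem_empty a ha
  · rw [hidx a] at hm1
    rw [hidx b] at hm2
    exact hne ((min_unique A hm1 (isMin_cone A a)).symm.trans
      (min_unique A hm2 (isMin_cone A b)))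

lemma wce_hf_idx_nonempty (hfc : Computable hf)
    (hred : ∀ x y, Emin A x y ↔ Emin B (hf x) (hf y))
    (hidx : ∀ a, Wce (idx a) = cone A a) (a : ℕ) :
    (Wce (hf (idx a))).Nonempty := by
  have hq : Partrec₂ (fun (c : Code) (x : ℕ) =>
      bif A.r x a then Part.none
      else Nat.rfind fun n => Part.some
        ((evaln n.unpair.1 (Denumerable.ofNat Code (hf (Encodable.encode c)))
          n.unpair.2).isSome)) := by
    apply Partrec.cond (A.comp.comp Computable.snd (Computable.const a)) Partrec.none
    exact comp_rfind_aux (comp_evaln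
      ((Primrec.fst.comp Primrec.unpair).to_comp.comp Computable.snd)
      ((Computable.ofNat Code).comp (hfc.comp
        (Computable.encode.comp (Computable.fst.comp Computable.fst))))
      ((Primrec.snd.comp Primrec.unpair).to_comp.comp Computable.snd))
  obtain ⟨c₀, hc₀⟩ := fixed_point₂ hq
  set e₁ : ℕ := Encodable.encode c₀ with he₁
  set Q : Prop := ∃ n : ℕ,
    (evaln n.unpair.1 (Denumerable.ofNat Code (hf e₁)) n.unpair.2).isSome = true with hQdef
  have hW : ∀ x, x ∈ Wce e₁ ↔ (A.r x a = false ∧ Q) := by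
    intro x
    rw [he₁, wce_encode]
    simp only [Set.mem_setOf_eq, hc₀]
    cases h : A.r x a
    · simpa [h] using (rfind_total_dom _)
    · simp [h]
  have hQiff : Q ↔ (Wce (hf e₁)).Nonempty := by
    constructor
    · rintro ⟨n, hn⟩
      exact ⟨n.unpair.2, dom_iff_evaln.2 ⟨n.unpair.1, hn⟩⟩
    · rintro ⟨y, hy⟩
      obtain ⟨k, hk⟩ := dom_iff_evaln.1 hy
      exact ⟨Nat.pair k y, by simpa using hk⟩
  by_contra hne
  have hemp : Wce (hf (idx a)) = ∅ := Set.not_nonempty_iff_eq_empty.1 hne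
  by_cases hQ : Q
  · have hWe : Wce e₁ = cone A a :=
      Set.ext fun x => ⟨fun h => ((hW x).1 h).1, fun h => (hW x).2 ⟨h, hQ⟩⟩
    rcases (hred e₁ (idx a)).1 (emin_cone_cone A hWe (hidx a)) with ⟨hE1, _⟩ | ⟨m, _, hm2⟩
    · exact (hQiff.1 hQ).ne_empty hE1
    · rw [hemp] at hm2; exact Set.notMem_empty m hm2.1
  · have hWe : Wce e₁ = ∅ :=
      Set.eq_empty_iff_forall_notMem.2 fun x hx => hQ ((hW x).1 hx).2
    obtain ⟨z, hz⟩ := exists_empty_index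
    have h2 := (hred e₁ z).1 (Or.inl ⟨hWe, hz⟩)
    have hfz : Wce (hf z) = ∅ := by
      rcases h2 with ⟨_, h⟩ | ⟨m, hm1, _⟩
      · exact h
      · exact absurd (hQiff.2 ⟨m, hm1.1⟩) hQ
    have h4 := (hred (idx a) z).2 (Or.inl ⟨hemp, hfz⟩)
    rcases h4 with ⟨h, _⟩ | ⟨m, _, hm2⟩
    · have ha : a ∈ Wce (idx a) := by rw [hidx]; exact (isMin_cone A a).1
      rw [h] at ha; exact Set.notMem_empty a ha
    · rw [hz] at hm2; exact Set.notMem_empty m hm2.1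

lemma order_pres (hfc : Computable hf)
    (hred : ∀ x y, Emin A x y ↔ Emin B (hf x) (hf y))
    (hidx : ∀ a, Wce (idx a) = cone A a)
    {g : ℕ → ℕ} (hg : ∀ a, IsMinOf B (Wce (hf (idx a))) (g a))
    {a b : ℕ} (hab : A.r a b = true) : B.r (g a) (g b) = true := by
  have hq : Partrec₂ (fun (c : Code) (x : ℕ) =>
      bif A.r x b then
        (bif A.r x a then Part.none
         else Nat.rfind fun s => Part.some
           ((evaln s (Denumerable.ofNat Code (hf (Encodable.encode c))) (g b)).isSome))
      else Part.some 0) := by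
    apply Partrec.cond (A.comp.comp Computable.snd (Computable.const b)) _
      (Partrec.const' (Part.some 0))
    apply Partrec.cond (A.comp.comp Computable.snd (Computable.const a)) Partrec.none
    exact comp_rfind_aux (comp_evaln Computable.snd
      ((Computable.ofNat Code).comp (hfc.comp
        (Computable.encode.comp (Computable.fst.comp Computable.fst))))
      (Computable.const (g b)))
  obtain ⟨c₀, hc₀⟩ := fixed_point₂ hq
  set e₁ : ℕ := Encodable.encode c₀ with he₁
  set P : Prop := ∃ s : ℕ,
    (evaln s (Denumerable.ofNat Code (hf e₁)) (g b)).isSome = true with hPdef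
  have hW : ∀ x, x ∈ Wce e₁ ↔ (A.r x b = false ∨ (A.r x a = false ∧ P)) := by
    intro x
    rw [he₁, wce_encode]
    simp only [Set.mem_setOf_eq, hc₀]
    cases hxb : A.r x b
    · simp [hxb]
    · cases hxa : A.r x a
      · simpa [hxb, hxa] using (rfind_total_dom _)
      · simp [hxb, hxa]
  have hPiff : P ↔ g b ∈ Wce (hf e₁) := by
    rw [hPdef]
    exact (dom_iff_evaln (c := Denumerable.ofNat Code (hf e₁)) (x := g b)).symm
  have hne : a ≠ b := by
    rintro rfl
    rw [r_irrefl A a] at hab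
    exact absurd hab (by simp)
  have gne : g a ≠ g b := by
    intro hgg
    exact (fun hE => not_emin_idx hidx hne ((hred (idx a) (idx b)).2 hE))
      (Or.inr ⟨g a, hg a, by rw [hgg]; exact hg b⟩)
  have hP : P := by
    by_contra hnP
    have hWe : Wce e₁ = cone A b := Set.ext fun x => by
      rw [hW x]
      exact ⟨fun h => h.elim id fun h' => absurd h'.2 hnP, Or.inl⟩
    rcases (hred e₁ (idx b)).1 (emin_cone_cone A hWe (hidx b)) with ⟨_, hE⟩ | ⟨m, hm1, hm2⟩
    · exact Set.notMem_empty (g b) (hE ▸ (hg b).1)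
    · have hmb : m = g b := min_unique B hm2 (hg b)
      exact hnP (hPiff.2 (hmb ▸ hm1.1))
  have hWe : Wce e₁ = cone A a := Set.ext fun x => by
    rw [hW x]
    constructor
    · rintro (h | h)
      · cases hxa : A.r x a
        · exact hxa
        · exact absurd (r_trans A hxa hab) (by rw [h]; simp)
      · exact h.1
    · exact fun h => Or.inr ⟨h, hP⟩
  rcases (hred e₁ (idx a)).1 (emin_cone_cone A hWe (hidx a)) with ⟨hE, _⟩ | ⟨m, hm1, hm2⟩
  · exact absurd (hE ▸ hPiff.1 hP) (Set.notMem_empty (g b))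
  · have hma : m = g a := min_unique B hm2 (hg a)
    have h5 : B.r (g b) (g a) = false := hma ▸ hm1.2 (g b) (hPiff.1 hP)
    exact r_of_ne_of_not B gne h5

end Main

/-! ### The stagewise search for the `B`-least enumerated element -/

/-- One step of the search for the `B`-least element enumerated by stage `s`. -/
def bestStep (B : CompWO) (c : Code) (s j : ℕ) (ih : Option ℕ) : Option ℕ :=
  bif (evaln s c j).isSome then
    Option.casesOn ih (some j) (fun y => bif B.r j y then some j else some y)
  else ih

/-- The `B`-least element below `k` enumerated by stage `s`. -/
def best (B : CompWO) (c : Code) (s k : ℕ) : Option ℕ :=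
  Nat.rec Option.none (fun j ih => bestStep B c s j ih) k

lemma best_spec (B : CompWO) (c : Code) (s : ℕ) : ∀ k : ℕ,
    (best B c s k = none ∧ ∀ x < k, (evaln s c x).isSome = false) ∨
    (∃ x, best B c s k = some x ∧ x < k ∧ (evaln s c x).isSome = true ∧
      ∀ y < k, (evaln s c y).isSome = true → B.r y x = false) := by
  intro k
  induction k with
  | zero => exact Or.inl ⟨rfl, fun x hx => absurd hx (Nat.not_lt_zero x)⟩
  | succ k ih =>
    have hstep : best B c s (k + 1) = bestStep B c s k (best B c s k) := rfl
    cases hj : (evaln s c k).isSome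
    · rcases ih with ⟨h1, h2⟩ | ⟨x, h1, h2, h3, h4⟩
      · refine Or.inl ⟨?_, ?_⟩
        · rw [hstep, bestStep, hj, h1]; rfl
        · intro x hx
          rcases Nat.lt_succ_iff_lt_or_eq.1 hx with hlt | rfl
          · exact h2 x hlt
          · exact hj
      · refine Or.inr ⟨x, ?_, Nat.lt_succ_of_lt h2, h3, ?_⟩
        · rw [hstep, bestStep, hj, h1]; rfl
        · intro y hy hys
          rcases Nat.lt_succ_iff_lt_or_eq.1 hy with hlt | rfl
          · exact h4 y hlt hys
          · rw [hj] at hys; exact absurd hys (by simp)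
    · rcases ih with ⟨h1, h2⟩ | ⟨x, h1, h2, h3, h4⟩
      · refine Or.inr ⟨k, ?_, Nat.lt_succ_self k, hj, ?_⟩
        · rw [hstep, bestStep, hj, h1]; rfl
        · intro y hy hys
          rcases Nat.lt_succ_iff_lt_or_eq.1 hy with hlt | rfl
          · rw [h2 y hlt] at hys; exact absurd hys (by simp)
          · exact r_irrefl B y
      · cases hr : B.r k x
        · refine Or.inr ⟨x, ?_, Nat.lt_succ_of_lt h2, h3, ?_⟩
          · rw [hstep, bestStep, hj, h1]; simp [hr]
          · intro y hy hys
            rcases Nat.lt_succ_iff_lt_or_eq.1 hy with hlt | rfl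
            · exact h4 y hlt hys
            · exact hr
        · refine Or.inr ⟨k, ?_, Nat.lt_succ_self k, hj, ?_⟩
          · rw [hstep, bestStep, hj, h1]; simp [hr]
          · intro y hy hys
            rcases Nat.lt_succ_iff_lt_or_eq.1 hy with hlt | rfl
            · cases hyk : B.r y k
              · rfl
              · exact absurd (r_trans B hyk hr) (by rw [h4 y hlt hys]; simp)
            · exact r_irrefl B y

lemma G_computable (B : CompWO) :
    Computable fun p : ℕ × ℕ =>
      (best B (Denumerable.ofNat Code p.1) p.2 p.2).getD 0 := by
  have hstep : Computable₂ fun (p : ℕ × ℕ) (q : ℕ × Option ℕ) =>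
      bestStep B (Denumerable.ofNat Code p.1) p.2 q.1 q.2 := by
    have hc : Computable fun x : (ℕ × ℕ) × ℕ × Option ℕ =>
        (evaln x.1.2 (Denumerable.ofNat Code x.1.1) x.2.1).isSome :=
      comp_evaln (Computable.snd.comp Computable.fst)
        ((Computable.ofNat Code).comp (Computable.fst.comp Computable.fst))
        (Computable.fst.comp Computable.snd)
    have hcases : Computable fun x : (ℕ × ℕ) × ℕ × Option ℕ =>
        Option.casesOn (motive := fun _ => Option ℕ) x.2.2 (some x.2.1)
          (fun y => bif B.r x.2.1 y then some x.2.1 else some y) := by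
      apply Computable.option_casesOn (Computable.snd.comp Computable.snd)
        (Computable.option_some.comp (Computable.fst.comp Computable.snd))
      apply Computable.cond
        (B.comp.comp (Computable.fst.comp (Computable.snd.comp Computable.fst))
          Computable.snd)
        (Computable.option_some.comp (Computable.fst.comp
          (Computable.snd.comp Computable.fst)))
        (Computable.option_some.comp Computable.snd)
    exact (Computable.cond hc hcases (Computable.snd.comp Computable.snd) :)
  have hb : Computable fun p : ℕ × ℕ =>
      best B (Denumerable.ofNat Code p.1) p.2 p.2 :=
    (Computable.nat_rec Computable.snd (Computable.const Option.none) hstep).of_eq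
      fun p => rfl
  exact Computable.option_getD hb (Computable.const 0)

lemma best_limit (B : CompWO) {c : Code} {m : ℕ}
    (hm : IsMinOf B {x | (eval c x).Dom} m) :
    ∃ N, ∀ s, N ≤ s → best B c s s = some m := by
  obtain ⟨t, ht⟩ := dom_iff_evaln.1 hm.1
  refine ⟨max t (m + 1), fun s hs => ?_⟩
  have hts : t ≤ s := le_trans (le_max_left _ _) hs
  have hms : m < s := lt_of_lt_of_le (lt_of_lt_of_le (Nat.lt_succ_self m)
    (le_max_right t (m + 1))) hs
  have hsome : (evaln s c m).isSome = true := by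
    obtain ⟨y, hy⟩ := Option.isSome_iff_exists.1 ht
    have hmem := evaln_mono hts (show y ∈ evaln t c m from hy)
    rw [Option.isSome_iff_exists]
    exact ⟨y, hmem⟩
  rcases best_spec B c s s with ⟨_, h2⟩ | ⟨x, h1, _, h3, h4⟩
  · rw [h2 m hms] at hsome; exact absurd hsome (by simp)
  · have hxW : x ∈ {x | (eval c x).Dom} := dom_iff_evaln.2 ⟨s, h3⟩
    have e1 : B.r x m = false := hm.2 x hxW
    have e2 : B.r m x = false := h4 m hms hsome
    rw [h1]
    exact congrArg some (eq_of_not_r B e2 e1).symm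

end Stmt8Aux

set_option maxHeartbeats 1000000 in
/-- If E_min(A) is computably reducible to E_min(B), then there is an embedding of A
into B computable from the halting problem; "computable from 0'" is rendered, via the
limit lemma, as being the pointwise limit of a computable function. -/
theorem stmt8 (A B : CompWO) (h : CompReducible (Emin A) (Emin B)) :
    ∃ g : ℕ → ℕ,
      (∃ G : ℕ → ℕ → ℕ, Computable₂ G ∧ ∀ a, ∃ N, ∀ s, N ≤ s → G a s = g a) ∧
      Function.Injective g ∧
      ∀ a b, A.r a b = true → B.r (g a) (g b) = true := by
  obtain ⟨hf, hfc, hred⟩ := h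
  obtain ⟨idx, idxc, hidx⟩ := Stmt8Aux.exists_idx A
  have hne : ∀ a, (Wce (hf (idx a))).Nonempty :=
    Stmt8Aux.wce_hf_idx_nonempty hfc hred hidx
  choose g hg using fun a => Stmt8Aux.exists_min B _ (hne a)
  refine ⟨g, ?_, ?_, ?_⟩
  · refine ⟨fun a s =>
      (Stmt8Aux.best B (Denumerable.ofNat Nat.Partrec.Code (hf (idx a))) s s).getD 0,
      ?_, ?_⟩
    · exact (Stmt8Aux.G_computable B).comp
        (((hfc.comp idxc).comp Computable.fst).pair Computable.snd)
    · intro a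
      obtain ⟨N, hN⟩ := Stmt8Aux.best_limit B (hg a)
      refine ⟨N, fun s hs => ?_⟩
      show (Stmt8Aux.best B (Denumerable.ofNat Nat.Partrec.Code (hf (idx a))) s s).getD 0
        = g a
      rw [hN s hs]
      rfl
  · intro a b hgg
    by_contra hne'
    exact Stmt8Aux.not_emin_idx hidx hne'
      ((hred _ _).2 (Or.inr ⟨g a, hg a, by rw [hgg]; exact hg b⟩))
  · exact fun a b hab => Stmt8Aux.order_pres hfc hred hidx hg hab
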